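/- The subgroup of (ℝ², +) generated by two linearly independent vectors w₁, w₂ and a third vector w₃ is discrete if and only if w₃ is a ℚ-linear combination of w₁ and w₂. -/

import Mathlib

open Module Submodule

/-- **The subgroup of `(ℝ²,+)` generated by two linearly independent vectors `w₁, w₂`
and a third vector `w₃` is discrete iff `w₃` is a `ℚ`-linear combination of `w₁, w₂`.** -/
theorem subgroup_discrete_iff_rat_combination
    (w₁ w₂ w₃ : ℝ × ℝ) (h : LinearIndependent ℝ ![w₁, w₂]) :
    DiscreteTopology ↥(AddSubgroup.closure ({w₁, w₂, w₃} : Set (ℝ × ℝ)))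
      ↔ ∃ a b : ℚ, w₃ = (a : ℝ) • w₁ + (b : ℝ) • w₂ := by
  set G := AddSubgroup.closure ({w₁, w₂, w₃} : Set (ℝ × ℝ)) with hGdef
  have hcard : Fintype.card (Fin 2) = finrank ℝ (ℝ × ℝ) := by
    simp [finrank_prod]
  let B : Basis (Fin 2) ℝ (ℝ × ℝ) := basisOfLinearIndependentOfCardEqFinrank h hcard
  have hBcoe : ⇑B = ![w₁, w₂] := coe_basisOfLinearIndependentOfCardEqFinrank h hcard
  have hB0 : B 0 = w₁ := by rw [hBcoe]; rfl
  have hB1 : B 1 = w₂ := by rw [hBcoe]; rfl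
  have hrepr : ∀ c d : ℝ, B.repr (c • w₁ + d • w₂) 0 = c ∧ B.repr (c • w₁ + d • w₂) 1 = d := by
    intro c d
    rw [← hB0, ← hB1]
    simp [Finsupp.single_apply]
  constructor
  · intro hd
    set a : ℝ := B.repr w₃ 0 with ha
    set b : ℝ := B.repr w₃ 1 with hb
    have hw3 : w₃ = a • w₁ + b • w₂ := by
      conv_lhs => rw [← B.sum_repr w₃]
      rw [Fin.sum_univ_two, hB0, hB1]
    -- finiteness of G inside a closed ball
    have hclosed : IsClosed (G : Set (ℝ × ℝ)) := AddSubgroup.isClosed_of_discrete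
    set R : ℝ := ‖w₁‖ + ‖w₂‖ with hR
    have hcpt : IsCompact ((G : Set (ℝ × ℝ)) ∩ Metric.closedBall 0 R) :=
      (isCompact_closedBall _ _).inter_left hclosed
    haveI hdisc : DiscreteTopology ((G : Set (ℝ × ℝ)) ∩ Metric.closedBall 0 R : Set (ℝ × ℝ)) :=
      DiscreteTopology.of_subset hd Set.inter_subset_left
    have hfin : ((G : Set (ℝ × ℝ)) ∩ Metric.closedBall 0 R).Finite := hcpt.finite (isDiscrete_iff_discreteTopology.2 hdisc)
    -- the test sequence
    set f : ℕ → ℝ × ℝ := fun n => Int.fract (n * a) • w₁ + Int.fract (n * b) • w₂ with hf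
    have hmem : ∀ n : ℕ, f n ∈ G := by
      intro n
      have h1 : w₁ ∈ G := AddSubgroup.subset_closure (by simp)
      have h2 : w₂ ∈ G := AddSubgroup.subset_closure (by simp)
      have h3 : w₃ ∈ G := AddSubgroup.subset_closure (by simp)
      have : f n = (n : ℤ) • w₃ + (-⌊(n : ℝ) * a⌋) • w₁ + (-⌊(n : ℝ) * b⌋) • w₂ := by
        simp only [hf, Int.fract, ← Int.cast_smul_eq_zsmul ℝ, hw3]
        push_cast
        module
      rw [this]
      exact G.add_mem (G.add_mem (G.zsmul_mem h3 _) (G.zsmul_mem h1 _)) (G.zsmul_mem h2 _)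
    have hbdd : ∀ n : ℕ, f n ∈ Metric.closedBall (0 : ℝ × ℝ) R := by
      intro n
      rw [Metric.mem_closedBall, dist_zero_right]
      calc ‖f n‖ ≤ ‖Int.fract (↑n * a) • w₁‖ + ‖Int.fract (↑n * b) • w₂‖ := norm_add_le _ _
        _ ≤ ‖w₁‖ + ‖w₂‖ := by
            gcongr <;> rw [norm_smul] <;>
              refine mul_le_of_le_one_left (norm_nonneg _) ?_ <;>
              rw [Real.norm_eq_abs, abs_of_nonneg (Int.fract_nonneg _)] <;>
              exact (Int.fract_lt_one _).le
    -- injectivity of `fract (n * x)` for irrational x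
    have hfract : ∀ x : ℝ, x ∉ Set.range ((↑) : ℚ → ℝ) →
        Function.Injective (fun n : ℕ => Int.fract ((n : ℝ) * x)) := by
      intro x hx n m hnm
      by_contra hne
      simp only [Int.fract_eq_fract] at hnm
      obtain ⟨z, hz⟩ := hnm
      rw [← sub_mul] at hz
      have hnm' : (n : ℝ) - (m : ℝ) ≠ 0 := by
        simpa [sub_eq_zero] using hne
      refine hx ⟨(z : ℚ) / ((n : ℚ) - (m : ℚ)), ?_⟩
      have : x = (z : ℝ) / ((n : ℝ) - (m : ℝ)) := by
        field_simp at hz ⊢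
        linarith [hz]
      rw [this]
      push_cast
      ring
    -- conclude
    have key : ∀ x ∈ ({a, b} : Set ℝ), x ∈ Set.range ((↑) : ℚ → ℝ) := by
      intro x hxm
      by_contra hx
      have hinj : Function.Injective f := by
        intro n m hnm
        have e0 : Int.fract (↑n * a) = Int.fract (↑m * a) := by
          have h1 := congrArg (fun v => B.repr v 0) hnm
          simp only [hf] at h1
          rwa [(hrepr _ _).1, (hrepr _ _).1] at h1
        have e1 : Int.fract (↑n * b) = Int.fract (↑m * b) := by
          have h1 := congrArg (fun v => B.repr v 1) hnm
          simp only [hf] at h1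
          rwa [(hrepr _ _).2, (hrepr _ _).2] at h1
        rcases hxm with rfl | rfl
        · exact hfract _ hx e0
        · exact hfract _ hx e1
      exact (Set.infinite_of_injective_forall_mem
        (s := (G : Set (ℝ × ℝ)) ∩ Metric.closedBall 0 R) hinj
        (fun n => Set.mem_inter (hmem n) (hbdd n))) hfin
    obtain ⟨qa, hqa⟩ := key a (by simp)
    obtain ⟨qb, hqb⟩ := key b (by simp)
    exact ⟨qa, qb, by rw [hw3, hqa, hqb]⟩
  · rintro ⟨a, b, hw3⟩
    have hden : ((a.den : ℝ) * (b.den : ℝ)) ≠ 0 := by positivity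
    set u : ℝ := ((a.den : ℝ) * (b.den : ℝ))⁻¹ with hu
    have hu0 : IsUnit u := isUnit_iff_ne_zero.2 (inv_ne_zero hden)
    set C : Basis (Fin 2) ℝ (ℝ × ℝ) := B.isUnitSMul (w := fun _ => u) (fun _ => hu0) with hC
    have hC0 : C 0 = u • w₁ := by rw [hC, Basis.isUnitSMul_apply, hB0]
    have hC1 : C 1 = u • w₂ := by rw [hC, Basis.isUnitSMul_apply, hB1]
    set L : AddSubgroup (ℝ × ℝ) := (span ℤ (Set.range C)).toAddSubgroup with hL
    haveI : DiscreteTopology L := inferInstance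
    have hC0mem : C 0 ∈ L := subset_span ⟨0, rfl⟩
    have hC1mem : C 1 ∈ L := subset_span ⟨1, rfl⟩
    have hw1L : w₁ ∈ L := by
      have : w₁ = ((a.den : ℤ) * (b.den : ℤ)) • C 0 := by
        rw [hC0, ← Int.cast_smul_eq_zsmul ℝ, smul_smul, hu]
        push_cast
        rw [mul_inv_cancel₀ (by positivity), one_smul]
      rw [this]; exact L.zsmul_mem hC0mem _
    have hw2L : w₂ ∈ L := by
      have : w₂ = ((a.den : ℤ) * (b.den : ℤ)) • C 1 := by
        rw [hC1, ← Int.cast_smul_eq_zsmul ℝ, smul_smul, hu]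
        push_cast
        rw [mul_inv_cancel₀ (by positivity), one_smul]
      rw [this]; exact L.zsmul_mem hC1mem _
    have hw3L : w₃ ∈ L := by
      have h3 : w₃ = (a.num * (b.den : ℤ)) • C 0 + (b.num * (a.den : ℤ)) • C 1 := by
        rw [hC0, hC1, ← Int.cast_smul_eq_zsmul ℝ, ← Int.cast_smul_eq_zsmul ℝ,
          smul_smul, smul_smul, hw3, hu]
        have ha' : (a : ℝ) = (a.num : ℝ) / (a.den : ℝ) := by rw [Rat.cast_def]
        have hb' : (b : ℝ) = (b.num : ℝ) / (b.den : ℝ) := by rw [Rat.cast_def]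
        rw [ha', hb']
        push_cast
        congr 1
        · congr 1
          field_simp
        · congr 1
          field_simp
      rw [h3]
      exact L.add_mem (L.zsmul_mem hC0mem _) (L.zsmul_mem hC1mem _)
    have hGL : G ≤ L := by
      rw [hGdef]
      refine AddSubgroup.closure_le L |>.2 ?_
      intro x hx
      rcases hx with rfl | rfl | rfl
      exacts [hw1L, hw2L, hw3L]
    exact DiscreteTopology.of_subset (s := (L : Set (ℝ × ℝ))) inferInstance hGL
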